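/- For every M > 0 there exist constants K > 0 and h₀ > 0, depending only on M, with the following property. Let a < b with h := (b − a)/4 ≤ h₀, and let x : [a, b] → ℝ² be five times continuously differentiable and unit-speed (‖ẋ(t)‖ = 1 for all t), with ‖x⁽ᵐ⁾(t)‖ ≤ M for all t ∈ [a, b] and all 2 ≤ m ≤ 5. Define w̃₂ := (3/(8h))·(x(b) − x(a)) − (1/4)·(ẋ(a) + ẋ(b)), ṽ₂ := w̃₂/‖w̃₂‖, w̃₁₃ := (3/(8h))·(x(b) − x(a)) − (1/8)·(ẋ(a) + ẋ(b)) − (1/4)·ṽ₂, w̃₁ := w̃₁₃ − (1/4)·(ẋ(b) − ẋ(a)), and w̃₃ := w̃₁₃ + (1/4)·(ẋ(b) − ẋ(a)). Then w̃₂, w̃₁, w̃₃ are all nonzero, and ‖ẋ(a + h) − w̃₁/‖w̃₁‖‖ ≤ K·h³ and ‖ẋ(a + 3h) − w̃₃/‖w̃₃‖‖ ≤ K·h³. -/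

import Mathlib

open Set

section helpers
variable {E : Type*} [NormedAddCommGroup E] [NormedSpace ℝ E]

private lemma qpv_step_bound {a b c : ℝ} {F G : ℝ → E} {C L : ℝ}
    (hd : ∀ t ∈ Icc a b, HasDerivWithinAt F (G t) (Icc a b) t)
    (hb : ∀ t ∈ Icc a b, ‖G t‖ ≤ C)
    (hc : c ∈ Icc a b) (hFc : F c = 0)
    (hL : ∀ t ∈ Icc a b, |t - c| ≤ L) (hC : 0 ≤ C) :
    ∀ t ∈ Icc a b, ‖F t‖ ≤ C * L := by
  intro t ht
  have h1 := (convex_Icc a b).norm_image_sub_le_of_norm_hasDerivWithin_le hd hb hc ht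
  rw [hFc, sub_zero, Real.norm_eq_abs] at h1
  exact h1.trans (mul_le_mul_of_nonneg_left (hL t ht) hC)

private lemma qpv_normalize_err {u v : E} (hv : ‖v‖ = 1) (hu : u ≠ 0) :
    ‖‖u‖⁻¹ • u - v‖ ≤ 2 * ‖u - v‖ := by
  have hupos : (0:ℝ) < ‖u‖ := norm_pos_iff.2 hu
  have h1 : ‖‖u‖⁻¹ • u - u‖ = |1 - ‖u‖| := by
    have : ‖u‖⁻¹ • u - u = (‖u‖⁻¹ - 1) • u := by rw [sub_smul, one_smul]
    rw [this, norm_smul, Real.norm_eq_abs,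
      show |‖u‖⁻¹ - 1| * ‖u‖ = |(‖u‖⁻¹ - 1) * ‖u‖| by
        rw [abs_mul, abs_of_nonneg (norm_nonneg u)],
      show (‖u‖⁻¹ - 1) * ‖u‖ = 1 - ‖u‖ by field_simp]
  have h2 : |1 - ‖u‖| ≤ ‖u - v‖ := by
    calc |1 - ‖u‖| = |‖u‖ - ‖v‖| := by rw [hv, abs_sub_comm]
    _ ≤ ‖u - v‖ := abs_norm_sub_norm_le u v
  calc ‖‖u‖⁻¹ • u - v‖ = ‖(‖u‖⁻¹ • u - u) + (u - v)‖ := by abel_nf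
  _ ≤ ‖‖u‖⁻¹ • u - u‖ + ‖u - v‖ := norm_add_le _ _
  _ ≤ 2 * ‖u - v‖ := by rw [h1]; linarith

end helpers

set_option maxHeartbeats 16000000

/-- Proposition 1 (quarter-point part). For every `M > 0` there
are `K > 0` and `h₀ > 0`, depending only on `M`, such that for every
unit-speed C⁵ curve `x : [a,b] → ℝ²` with all derivatives of order `2,…,5`
bounded by `M` and `h := (b-a)/4 ≤ h₀`, the vectors
`w̃₂ := (3/(8h))(x b - x a) - (1/4)(ẋ a + ẋ b)`, `ṽ₂ := w̃₂/‖w̃₂‖`,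
`w̃₁₃ := (3/(8h))(x b - x a) - (1/8)(ẋ a + ẋ b) - (1/4) ṽ₂`,
`w̃₁ := w̃₁₃ - (1/4)(ẋ b - ẋ a)` and `w̃₃ := w̃₁₃ + (1/4)(ẋ b - ẋ a)` are all
nonzero, with `‖ẋ(a+h) - w̃₁/‖w̃₁‖‖ ≤ K h³` and
`‖ẋ(a+3h) - w̃₃/‖w̃₃‖‖ ≤ K h³`. -/
theorem quarter_point_velocity_estimate :
    ∀ M : ℝ, 0 < M → ∃ K : ℝ, 0 < K ∧ ∃ h₀ : ℝ, 0 < h₀ ∧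
      ∀ (a b : ℝ) (x x1 x2 x3 x4 x5 : ℝ → EuclideanSpace ℝ (Fin 2)),
        a < b → (b - a) / 4 ≤ h₀ →
        (∀ t ∈ Set.Icc a b, HasDerivWithinAt x (x1 t) (Set.Icc a b) t) →
        (∀ t ∈ Set.Icc a b, HasDerivWithinAt x1 (x2 t) (Set.Icc a b) t) →
        (∀ t ∈ Set.Icc a b, HasDerivWithinAt x2 (x3 t) (Set.Icc a b) t) →
        (∀ t ∈ Set.Icc a b, HasDerivWithinAt x3 (x4 t) (Set.Icc a b) t) →
        (∀ t ∈ Set.Icc a b, HasDerivWithinAt x4 (x5 t) (Set.Icc a b) t) →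
        ContinuousOn x5 (Set.Icc a b) →
        (∀ t ∈ Set.Icc a b, ‖x1 t‖ = 1) →
        (∀ t ∈ Set.Icc a b,
          ‖x2 t‖ ≤ M ∧ ‖x3 t‖ ≤ M ∧ ‖x4 t‖ ≤ M ∧ ‖x5 t‖ ≤ M) →
        ∀ h : ℝ, h = (b - a) / 4 →
        ∀ w₂ w₁₃ w₁ w₃ : EuclideanSpace ℝ (Fin 2),
          w₂ = (3 / (8 * h)) • (x b - x a) - (1 / 4 : ℝ) • (x1 a + x1 b) →
          w₁₃ = (3 / (8 * h)) • (x b - x a) - (1 / 8 : ℝ) • (x1 a + x1 b)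
              - (1 / 4 : ℝ) • (‖w₂‖⁻¹ • w₂) →
          w₁ = w₁₃ - (1 / 4 : ℝ) • (x1 b - x1 a) →
          w₃ = w₁₃ + (1 / 4 : ℝ) • (x1 b - x1 a) →
          w₂ ≠ 0 ∧ w₁ ≠ 0 ∧ w₃ ≠ 0 ∧
          ‖x1 (a + h) - ‖w₁‖⁻¹ • w₁‖ ≤ K * h ^ 3 ∧
          ‖x1 (a + 3 * h) - ‖w₃‖⁻¹ • w₃‖ ≤ K * h ^ 3 := by
  intro M hM
  refine ⟨200 * M, by positivity, min 1 (1 / (200 * M)), by positivity, ?_⟩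
  intro a b x x1 x2 x3 x4 x5 hab hh0 hdx hdx1 hdx2 hdx3 hdx4 _hcx5 hunit hbnd
    h hdef w₂ w₁₃ w₁ w₃ hw₂ hw₁₃ hw₁ hw₃
  have hpos : 0 < h := by rw [hdef]; linarith
  have hb4 : b = a + 4 * h := by rw [hdef]; ring
  set c : ℝ := a + 2 * h with hcdef
  have hca : c ∈ Icc a b := ⟨by simp [hcdef]; linarith, by rw [hb4, hcdef]; linarith⟩
  have hma : a ∈ Icc a b := ⟨le_rfl, hab.le⟩
  have hmb : b ∈ Icc a b := ⟨hab.le, le_rfl⟩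
  have hm1 : a + h ∈ Icc a b := ⟨by linarith, by rw [hb4]; linarith⟩
  have hm3 : a + 3 * h ∈ Icc a b := ⟨by linarith, by rw [hb4]; linarith⟩
  have hh1 : h ≤ 1 := le_trans (hdef ▸ hh0) (min_le_left _ _)
  have hMh : 200 * M * h ≤ 1 := by
    have h2 := le_trans (hdef ▸ hh0) (min_le_right 1 (1 / (200 * M)))
    rw [le_div_iff₀ (by positivity)] at h2
    linarith
  have hh43 : h ^ 4 ≤ h ^ 3 := pow_le_pow_of_le_one hpos.le hh1 (by norm_num)
  have hh31 : h ^ 3 ≤ h := by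
    simpa using pow_le_pow_of_le_one hpos.le hh1 (by norm_num : 1 ≤ 3)
  have hMh34 : M * h ^ 4 ≤ M * h ^ 3 := mul_le_mul_of_nonneg_left hh43 hM.le
  have hMh3nn : 0 < M * h ^ 3 := by positivity
  have habs : ∀ t ∈ Icc a b, |t - c| ≤ 2 * h := by
    intro t ht
    rw [abs_le]
    constructor
    · have := ht.1; simp only [hcdef]; linarith
    · have := ht.2; rw [hb4] at this; simp only [hcdef]; linarith
  -- Taylor remainder functions
  set F4 : ℝ → EuclideanSpace ℝ (Fin 2) := fun t => x4 t - x4 c with hF4def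
  set F3 : ℝ → EuclideanSpace ℝ (Fin 2) :=
    fun t => x3 t - x3 c - (t - c) • x4 c with hF3def
  set F2 : ℝ → EuclideanSpace ℝ (Fin 2) :=
    fun t => x2 t - x2 c - (t - c) • x3 c - ((t - c) ^ 2 / 2) • x4 c with hF2def
  set F1 : ℝ → EuclideanSpace ℝ (Fin 2) :=
    fun t => x1 t - x1 c - (t - c) • x2 c - ((t - c) ^ 2 / 2) • x3 c
      - ((t - c) ^ 3 / 6) • x4 c with hF1def
  set F0 : ℝ → EuclideanSpace ℝ (Fin 2) :=
    fun t => x t - x c - (t - c) • x1 c - ((t - c) ^ 2 / 2) • x2 c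
      - ((t - c) ^ 3 / 6) • x3 c - ((t - c) ^ 4 / 24) • x4 c with hF0def
  have hid : ∀ t, HasDerivWithinAt (fun t => t - c) 1 (Icc a b) t :=
    fun t => (hasDerivWithinAt_id t _).sub_const c
  have hdF4 : ∀ t ∈ Icc a b, HasDerivWithinAt F4 (x5 t) (Icc a b) t :=
    fun t ht => (hdx4 t ht).sub_const _
  have hdF3 : ∀ t ∈ Icc a b, HasDerivWithinAt F3 (F4 t) (Icc a b) t := by
    intro t ht
    have h1 := ((hdx3 t ht).sub_const (x3 c)).sub ((hid t).smul_const (x4 c))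
    refine h1.congr_deriv ?_
    simp [hF4def]
  have hdF2 : ∀ t ∈ Icc a b, HasDerivWithinAt F2 (F3 t) (Icc a b) t := by
    intro t ht
    have h1 := (((hdx2 t ht).sub_const (x2 c)).sub ((hid t).smul_const (x3 c))).sub
      ((((hid t).pow 2).div_const 2).smul_const (x4 c))
    refine h1.congr_deriv ?_
    simp only [hF3def]
    match_scalars <;> ring
  have hdF1 : ∀ t ∈ Icc a b, HasDerivWithinAt F1 (F2 t) (Icc a b) t := by
    intro t ht
    have h1 := ((((hdx1 t ht).sub_const (x1 c)).sub ((hid t).smul_const (x2 c))).sub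
      ((((hid t).pow 2).div_const 2).smul_const (x3 c))).sub
      ((((hid t).pow 3).div_const 6).smul_const (x4 c))
    refine h1.congr_deriv ?_
    simp only [hF2def]
    match_scalars <;> ring
  have hdF0 : ∀ t ∈ Icc a b, HasDerivWithinAt F0 (F1 t) (Icc a b) t := by
    intro t ht
    have h1 := (((((hdx t ht).sub_const (x c)).sub ((hid t).smul_const (x1 c))).sub
      ((((hid t).pow 2).div_const 2).smul_const (x2 c))).sub
      ((((hid t).pow 3).div_const 6).smul_const (x3 c))).sub
      ((((hid t).pow 4).div_const 24).smul_const (x4 c))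
    refine h1.congr_deriv ?_
    simp only [hF1def]
    match_scalars <;> ring
  -- remainder bounds
  have hx5b : ∀ t ∈ Icc a b, ‖x5 t‖ ≤ M := fun t ht => (hbnd t ht).2.2.2
  have nF4 : ∀ t ∈ Icc a b, ‖F4 t‖ ≤ M * (2 * h) :=
    qpv_step_bound hdF4 hx5b hca (by simp [hF4def]) habs hM.le
  have nF3 : ∀ t ∈ Icc a b, ‖F3 t‖ ≤ M * (2 * h) * (2 * h) :=
    qpv_step_bound hdF3 nF4 hca (by simp [hF3def]) habs (by positivity)
  have nF2 : ∀ t ∈ Icc a b, ‖F2 t‖ ≤ M * (2 * h) * (2 * h) * (2 * h) :=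
    qpv_step_bound hdF2 nF3 hca (by simp [hF2def]) habs (by positivity)
  have nF1' : ∀ t ∈ Icc a b, ‖F1 t‖ ≤ M * (2 * h) * (2 * h) * (2 * h) * (2 * h) :=
    qpv_step_bound hdF1 nF2 hca (by simp [hF1def]) habs (by positivity)
  have nF0' : ∀ t ∈ Icc a b,
      ‖F0 t‖ ≤ M * (2 * h) * (2 * h) * (2 * h) * (2 * h) * (2 * h) :=
    qpv_step_bound hdF0 nF1' hca (by simp [hF0def]) habs (by positivity)
  have nF1 : ∀ t ∈ Icc a b, ‖F1 t‖ ≤ 16 * M * h ^ 4 :=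
    fun t ht => (nF1' t ht).trans_eq (by ring)
  have nF0 : ∀ t ∈ Icc a b, ‖F0 t‖ ≤ 32 * M * h ^ 5 :=
    fun t ht => (nF0' t ht).trans_eq (by ring)
  -- Taylor expansions at the quarter points
  have hbc : b - c = 2 * h := by rw [hb4, hcdef]; ring
  have hac : a - c = -(2 * h) := by rw [hcdef]; ring
  have h1c : a + h - c = -h := by rw [hcdef]; ring
  have h3c : a + 3 * h - c = h := by rw [hcdef]; ring
  have hXba : x b - x a = (4 * h) • x1 c + ((8 / 3) * h ^ 3) • x3 c + (F0 b - F0 a) := by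
    simp only [hF0def, hbc, hac]
    match_scalars <;> ring
  have hS1 : x1 a + x1 b = (2 : ℝ) • x1 c + (4 * h ^ 2) • x3 c + (F1 a + F1 b) := by
    simp only [hF1def, hbc, hac]
    match_scalars <;> ring
  have hD1 : x1 b - x1 a = (4 * h) • x2 c + ((8 / 3) * h ^ 3) • x4 c + (F1 b - F1 a) := by
    simp only [hF1def, hbc, hac]
    match_scalars <;> ring
  have hq1 : x1 (a + h) = x1 c + (-h) • x2 c + (h ^ 2 / 2) • x3 c
      + (-(h ^ 3) / 6) • x4 c + F1 (a + h) := by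
    simp only [hF1def, h1c]
    match_scalars <;> ring
  have hq3 : x1 (a + 3 * h) = x1 c + h • x2 c + (h ^ 2 / 2) • x3 c
      + (h ^ 3 / 6) • x4 c + F1 (a + 3 * h) := by
    simp only [hF1def, h3c]
    match_scalars <;> ring
  -- norm bounds on the error building blocks
  have nA : ‖(3 / (8 * h)) • (F0 b - F0 a)‖ ≤ 24 * M * h ^ 4 := by
    rw [norm_smul, Real.norm_eq_abs, abs_of_pos (by positivity)]
    have hsub : ‖F0 b - F0 a‖ ≤ 64 * M * h ^ 5 :=
      (norm_sub_le _ _).trans (by linarith [nF0 b hmb, nF0 a hma])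
    calc 3 / (8 * h) * ‖F0 b - F0 a‖ ≤ 3 / (8 * h) * (64 * M * h ^ 5) :=
          mul_le_mul_of_nonneg_left hsub (by positivity)
    _ = 24 * M * h ^ 4 := by field_simp; ring
  have nSum : ‖F1 a + F1 b‖ ≤ 32 * M * h ^ 4 :=
    (norm_add_le _ _).trans (by linarith [nF1 a hma, nF1 b hmb])
  have nDiff : ‖F1 b - F1 a‖ ≤ 32 * M * h ^ 4 :=
    (norm_sub_le _ _).trans (by linarith [nF1 a hma, nF1 b hmb])
  have nB : ‖(1 / 8 : ℝ) • (F1 a + F1 b)‖ ≤ 4 * M * h ^ 4 := by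
    rw [norm_smul, Real.norm_eq_abs]
    rw [show |(1 / 8 : ℝ)| = 1 / 8 by norm_num]
    linarith
  have nB4 : ‖(1 / 4 : ℝ) • (F1 a + F1 b)‖ ≤ 8 * M * h ^ 4 := by
    rw [norm_smul, Real.norm_eq_abs]
    rw [show |(1 / 4 : ℝ)| = 1 / 4 by norm_num]
    linarith
  have nD : ‖(1 / 4 : ℝ) • (F1 b - F1 a)‖ ≤ 8 * M * h ^ 4 := by
    rw [norm_smul, Real.norm_eq_abs]
    rw [show |(1 / 4 : ℝ)| = 1 / 4 by norm_num]
    linarith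
  -- w₂ estimate
  have hw2p : w₂ - x1 c = (3 / (8 * h)) • (F0 b - F0 a) - (1 / 4 : ℝ) • (F1 a + F1 b) := by
    rw [hw₂, hXba, hS1]
    match_scalars <;> field_simp [hpos.ne'] <;> ring
  have nW2 : ‖w₂ - x1 c‖ ≤ 32 * M * h ^ 4 := by
    rw [hw2p]
    exact (norm_sub_le _ _).trans (by linarith)
  have hnc : ‖x1 c‖ = 1 := hunit c hca
  have hMh4 : 32 * M * h ^ 4 ≤ 32 / 200 := by nlinarith
  have h2ne : w₂ ≠ 0 := by
    intro h0
    rw [h0, zero_sub, norm_neg, hnc] at nW2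
    linarith
  have nV2 : ‖‖w₂‖⁻¹ • w₂ - x1 c‖ ≤ 64 * M * h ^ 4 :=
    (qpv_normalize_err hnc h2ne).trans (by linarith)
  -- w₁ estimate
  have hw1id : w₁ - x1 (a + h) = (-(h ^ 3) / 2) • x4 c
      + ((3 / (8 * h)) • (F0 b - F0 a) - (1 / 8 : ℝ) • (F1 a + F1 b)
        - (1 / 4 : ℝ) • (‖w₂‖⁻¹ • w₂ - x1 c) - (1 / 4 : ℝ) • (F1 b - F1 a)
        - F1 (a + h)) := by
    rw [hw₁, hw₁₃, hXba, hS1, hD1, hq1]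
    match_scalars <;> field_simp [hpos.ne'] <;> ring
  have hw3id : w₃ - x1 (a + 3 * h) = (h ^ 3 / 2) • x4 c
      + ((3 / (8 * h)) • (F0 b - F0 a) - (1 / 8 : ℝ) • (F1 a + F1 b)
        - (1 / 4 : ℝ) • (‖w₂‖⁻¹ • w₂ - x1 c) + (1 / 4 : ℝ) • (F1 b - F1 a)
        - F1 (a + 3 * h)) := by
    rw [hw₃, hw₁₃, hXba, hS1, hD1, hq3]
    match_scalars <;> field_simp [hpos.ne'] <;> ring
  have nC : ‖(1 / 4 : ℝ) • (‖w₂‖⁻¹ • w₂ - x1 c)‖ ≤ 16 * M * h ^ 4 := by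
    rw [norm_smul, Real.norm_eq_abs]
    rw [show |(1 / 4 : ℝ)| = 1 / 4 by norm_num]
    linarith
  have nS1 : ‖(-(h ^ 3) / 2) • x4 c‖ ≤ M * h ^ 3 / 2 := by
    rw [norm_smul, Real.norm_eq_abs]
    have hnn : (0:ℝ) ≤ h ^ 3 := by positivity
    rw [show |(-(h ^ 3) / 2)| = h ^ 3 / 2 by
      rw [abs_of_nonpos (by linarith)]; ring]
    have hb4c := (hbnd c hca).2.2.1
    calc h ^ 3 / 2 * ‖x4 c‖ ≤ h ^ 3 / 2 * M :=
          mul_le_mul_of_nonneg_left hb4c (by positivity)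
    _ = M * h ^ 3 / 2 := by ring
  have nS3 : ‖(h ^ 3 / 2) • x4 c‖ ≤ M * h ^ 3 / 2 := by
    rw [norm_smul, Real.norm_eq_abs, abs_of_nonneg (by positivity)]
    have hb4c := (hbnd c hca).2.2.1
    calc h ^ 3 / 2 * ‖x4 c‖ ≤ h ^ 3 / 2 * M :=
          mul_le_mul_of_nonneg_left hb4c (by positivity)
    _ = M * h ^ 3 / 2 := by ring
  have nJ1 : ‖w₁ - x1 (a + h)‖ ≤ 69 * M * h ^ 3 := by
    rw [hw1id]
    set A := (3 / (8 * h)) • (F0 b - F0 a)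
    set B := (1 / 8 : ℝ) • (F1 a + F1 b)
    set C := (1 / 4 : ℝ) • (‖w₂‖⁻¹ • w₂ - x1 c)
    set D := (1 / 4 : ℝ) • (F1 b - F1 a)
    set Em := F1 (a + h)
    have e0 := norm_add_le ((-(h ^ 3) / 2) • x4 c) (A - B - C - D - Em)
    have e1 := norm_sub_le (A - B - C - D) Em
    have e2 := norm_sub_le (A - B - C) D
    have e3 := norm_sub_le (A - B) C
    have e4 := norm_sub_le A B
    have hEm := nF1 (a + h) hm1
    calc ‖(-(h ^ 3) / 2) • x4 c + (A - B - C - D - Em)‖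
        ≤ M * h ^ 3 / 2 + 68 * M * h ^ 4 := by linarith
    _ ≤ 69 * M * h ^ 3 := by linarith
  have nJ3 : ‖w₃ - x1 (a + 3 * h)‖ ≤ 69 * M * h ^ 3 := by
    rw [hw3id]
    set A := (3 / (8 * h)) • (F0 b - F0 a)
    set B := (1 / 8 : ℝ) • (F1 a + F1 b)
    set C := (1 / 4 : ℝ) • (‖w₂‖⁻¹ • w₂ - x1 c)
    set D := (1 / 4 : ℝ) • (F1 b - F1 a)
    set Em := F1 (a + 3 * h)
    have e0 := norm_add_le ((h ^ 3 / 2) • x4 c) (A - B - C + D - Em)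
    have e1 := norm_sub_le (A - B - C + D) Em
    have e2 := norm_add_le (A - B - C) D
    have e3 := norm_sub_le (A - B) C
    have e4 := norm_sub_le A B
    have hEm := nF1 (a + 3 * h) hm3
    calc ‖(h ^ 3 / 2) • x4 c + (A - B - C + D - Em)‖
        ≤ M * h ^ 3 / 2 + 68 * M * h ^ 4 := by linarith
    _ ≤ 69 * M * h ^ 3 := by linarith
  have hMh3' : 69 * M * h ^ 3 ≤ 69 / 200 := by nlinarith
  have h1ne : w₁ ≠ 0 := by
    intro h0
    rw [h0, zero_sub, norm_neg, hunit _ hm1] at nJ1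
    linarith
  have h3ne : w₃ ≠ 0 := by
    intro h0
    rw [h0, zero_sub, norm_neg, hunit _ hm3] at nJ3
    linarith
  refine ⟨h2ne, h1ne, h3ne, ?_, ?_⟩
  · rw [norm_sub_rev]
    calc ‖‖w₁‖⁻¹ • w₁ - x1 (a + h)‖ ≤ 2 * ‖w₁ - x1 (a + h)‖ :=
          qpv_normalize_err (hunit _ hm1) h1ne
    _ ≤ 2 * (69 * M * h ^ 3) := by linarith
    _ ≤ 200 * M * h ^ 3 := by linarith
  · rw [norm_sub_rev]
    calc ‖‖w₃‖⁻¹ • w₃ - x1 (a + 3 * h)‖ ≤ 2 * ‖w₃ - x1 (a + 3 * h)‖ :=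
          qpv_normalize_err (hunit _ hm3) h3ne
    _ ≤ 2 * (69 * M * h ^ 3) := by linarith
    _ ≤ 200 * M * h ^ 3 := by linarith
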